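/- Let f : ℝ → ℝ be of class C^n near 0 with f(t) = t^m g(t) near 0 for a continuous function g, where m < n is the order of flatness of f at 0 (the supremum of integers p with f(t) = t^p h(t) for continuous h). Then g is of class C^{n-m} near 0 and g(0) ≠ 0. -/

import Mathlib

open Metric
open MeasureTheory intervalIntegral Real

/-- Smoothness of the parametric integral `t ↦ ∫₀¹ s^j φ(s t) ds`. -/
lemma paramInt_contDiff : ∀ (k : ℕ) (φ : ℝ → ℝ), ContDiff ℝ k φ → ∀ j : ℕ,
    ContDiff ℝ k (fun t : ℝ => ∫ s in (0:ℝ)..1, s ^ j * φ (s * t)) := by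
  intro k
  induction k with
  | zero =>
    intro φ hφ j
    rw [show ((0:ℕ) : WithTop ℕ∞) = 0 from rfl, contDiff_zero] at hφ ⊢
    exact continuous_parametric_intervalIntegral_of_continuous'
      (f := fun (t : ℝ) (s : ℝ) => s ^ j * φ (s * t)) (μ := volume)
      (by fun_prop) 0 1
  | succ k ih =>
    intro φ hφ j
    have hφd : Differentiable ℝ φ := hφ.differentiable (by simp)
    have hφ' : ContDiff ℝ k (deriv φ) := by
      have := (contDiff_succ_iff_deriv (n := (k : WithTop ℕ∞))).mp (by exact_mod_cast hφ)
      exact this.2.2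
    have key : ∀ t₀ : ℝ, HasDerivAt (fun t => ∫ s in (0:ℝ)..1, s ^ j * φ (s * t))
        (∫ s in (0:ℝ)..1, s ^ (j+1) * deriv φ (s * t₀)) t₀ := by
      intro t₀
      obtain ⟨C, hC⟩ : ∃ C, ∀ y ∈ Set.Icc (-(|t₀|+1)) (|t₀|+1), ‖deriv φ y‖ ≤ C :=
        isCompact_Icc.exists_bound_of_continuousOn hφ'.continuous.continuousOn
      have hcont : ∀ x : ℝ, Continuous (fun s : ℝ => s ^ j * φ (s * x)) := by
        intro x; fun_prop
      have hcont' : Continuous (fun s : ℝ => s ^ (j+1) * deriv φ (s * t₀)) :=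
        (continuous_pow _).mul (hφ'.continuous.comp (continuous_id.mul continuous_const))
      have := hasDerivAt_integral_of_dominated_loc_of_deriv_le (μ := volume)
        (F := fun (t : ℝ) (s : ℝ) => s ^ j * φ (s * t))
        (F' := fun (t : ℝ) (s : ℝ) => s ^ (j+1) * deriv φ (s * t))
        (x₀ := t₀) (a := 0) (b := 1) (bound := fun _ => C) (ball_mem_nhds t₀ one_pos)
        (Filter.Eventually.of_forall fun x => (hcont x).aestronglyMeasurable)
        ((hcont t₀).intervalIntegrable 0 1)
        hcont'.aestronglyMeasurable
        ?_ intervalIntegrable_const ?_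
      · exact this.2
      · refine Filter.Eventually.of_forall fun s hs x hx => ?_
        have hs' : 0 < s ∧ s ≤ 1 := by
          rw [Set.uIoc_of_le (by norm_num : (0:ℝ) ≤ 1)] at hs
          exact ⟨hs.1, hs.2⟩
        have hsx : s * x ∈ Set.Icc (-(|t₀|+1)) (|t₀|+1) := by
          have hxb : |x| < |t₀| + 1 := by
            have := mem_ball_iff_norm.mp hx
            calc |x| ≤ |x - t₀| + |t₀| := by
                  simpa using abs_sub_abs_le_abs_sub x t₀ |>.trans (le_abs_self _) |>.trans (le_refl _)
              _ < |t₀| + 1 := by rw [Real.norm_eq_abs] at this; linarith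
          have : |s * x| ≤ |x| := by
            rw [abs_mul]
            calc |s| * |x| ≤ 1 * |x| := by
                  apply mul_le_mul_of_nonneg_right _ (abs_nonneg x)
                  rw [abs_of_pos hs'.1]; exact hs'.2
              _ = |x| := one_mul _
          constructor <;> [linarith [neg_abs_le (s*x)]; linarith [le_abs_self (s*x)]]
        calc ‖s ^ (j+1) * deriv φ (s * x)‖ = |s| ^ (j+1) * ‖deriv φ (s * x)‖ := by
              rw [norm_mul, norm_pow]; rfl
          _ ≤ 1 * C := by
              apply mul_le_mul _ (hC _ hsx) (norm_nonneg _) zero_le_one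
              apply pow_le_one₀ (abs_nonneg s)
              rw [abs_of_pos hs'.1]; exact hs'.2
          _ = C := one_mul C
      · refine Filter.Eventually.of_forall fun s _ x _ => ?_
        have h1 : HasDerivAt (fun x : ℝ => s * x) s x := by
          simpa using (hasDerivAt_id x).const_mul s
        have h2 : HasDerivAt φ (deriv φ (s * x)) (s * x) := (hφd (s * x)).hasDerivAt
        have := (h2.comp x h1).const_mul (s ^ j)
        refine this.congr_deriv ?_
        ring
    rw [show ((k+1 : ℕ) : WithTop ℕ∞) = (k : WithTop ℕ∞) + 1 by push_cast; ring,
      contDiff_succ_iff_deriv]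
    refine ⟨fun t => (key t).differentiableAt, ?_, ?_⟩
    · intro h; exact absurd h (by simp)
    · have hde : deriv (fun t => ∫ s in (0:ℝ)..1, s ^ j * φ (s * t)) =
          fun t => ∫ s in (0:ℝ)..1, s ^ (j+1) * deriv φ (s * t) := funext fun t => (key t).deriv
      rw [hde]; exact ih (deriv φ) hφ' (j+1)

/-- Hadamard's lemma: if `f` is `C^(n+1)` then `dslope f 0` is `C^n`. -/
lemma hadamard_dslope {n : ℕ} {f : ℝ → ℝ} (hf : ContDiff ℝ ((n : WithTop ℕ∞) + 1) f) :
    ContDiff ℝ n (dslope f 0) := by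
  have hfd : Differentiable ℝ f := hf.differentiable (by
    simp)
  have hf' : ContDiff ℝ n (deriv f) := ((contDiff_succ_iff_deriv).mp hf).2.2
  have hd : dslope f 0 = fun t => ∫ s in (0:ℝ)..1, deriv f (s * t) := by
    funext t
    rcases eq_or_ne t 0 with rfl | ht
    · simp [dslope_same]
    · rw [dslope_of_ne _ ht, slope_def_field]
      have h1 : (∫ s in (0:ℝ)..1, deriv f (s * t)) = t⁻¹ • ∫ u in (0:ℝ)..t, deriv f u := by
        have := intervalIntegral.integral_comp_mul_right (a := (0:ℝ)) (b := 1)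
          (fun u => deriv f u) ht
        simpa using this
      have h2 : (∫ u in (0:ℝ)..t, deriv f u) = f t - f 0 :=
        intervalIntegral.integral_deriv_eq_sub (fun x _ => hfd x)
          (hf'.continuous.intervalIntegrable 0 t)
      rw [h1, h2]
      rw [smul_eq_mul, sub_zero]
      field_simp
  rw [hd]
  have := paramInt_contDiff n (deriv f) hf' 0
  simpa using this

/-- Global factorization lemma: if `f` is `C^n` and `f t = t^m G t` with `G` continuous,
`m ≤ n`, then `G` is `C^(n-m)`. -/
lemma factor_global : ∀ (m n : ℕ), m ≤ n → ∀ (f G : ℝ → ℝ), ContDiff ℝ n f →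
    Continuous G → (∀ t, f t = t ^ m * G t) → ContDiff ℝ ((n - m : ℕ)) G := by
  intro m
  induction m with
  | zero =>
    intro n _ f G hf _ heq
    have hGf : G = f := by funext t; rw [heq t]; ring
    rw [hGf]
    simpa using hf
  | succ m ih =>
    intro n hmn f G hf hG heq
    obtain ⟨n', rfl⟩ : ∃ n', n = n' + 1 := ⟨n - 1, by omega⟩
    have hD : ContDiff ℝ n' (dslope f 0) := hadamard_dslope (by exact_mod_cast hf)
    have hf0 : f 0 = 0 := by rw [heq 0]; ring
    have h1 : ∀ t : ℝ, t ≠ 0 → dslope f 0 t = t ^ m * G t := by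
      intro t ht
      have hs := sub_smul_dslope f 0 t
      rw [sub_zero, smul_eq_mul, hf0, sub_zero, heq t] at hs
      have : t * dslope f 0 t = t * (t ^ m * G t) := by rw [hs]; ring
      exact mul_left_cancel₀ ht this
    have hDeq : dslope f 0 = fun t => t ^ m * G t := by
      apply Continuous.ext_on (dense_compl_singleton (0:ℝ)) hD.continuous
        ((continuous_pow m).mul hG)
      intro t ht
      exact h1 t ht
    have := ih n' (by omega) (dslope f 0) G hD hG (fun t => by rw [hDeq])
    have e : n' - m = n' + 1 - (m + 1) := by omega
    rwa [e] at this

lemma psi_chi {r y : ℝ} (hr : 0 < r) (hy : |y| < r) :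
    (y / Real.sqrt (r^2 - y^2)) * (r / Real.sqrt (1 + (y / Real.sqrt (r^2 - y^2))^2)) = y := by
  have h1 : 0 < r^2 - y^2 := by nlinarith [sq_abs y, abs_nonneg y]
  set s := Real.sqrt (r^2 - y^2) with hsdef
  have hs : 0 < s := Real.sqrt_pos.mpr h1
  have hs2 : s^2 = r^2 - y^2 := Real.sq_sqrt h1.le
  have key : 1 + (y/s)^2 = (r/s)^2 := by
    field_simp
    linarith [hs2]
  rw [key, Real.sqrt_sq (by positivity)]
  field_simp

lemma psi_lt {r t : ℝ} (hr : 0 < r) : |t * (r / Real.sqrt (1 + t^2))| < r := by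
  have h1 : 0 < Real.sqrt (1 + t^2) := Real.sqrt_pos.mpr (by positivity)
  have h2 : |t| < Real.sqrt (1 + t^2) := by
    have := Real.sqrt_lt_sqrt (sq_nonneg t) (by linarith : t^2 < 1 + t^2)
    rwa [Real.sqrt_sq_eq_abs] at this
  rw [abs_mul, abs_of_pos (by positivity : (0:ℝ) < r / Real.sqrt (1 + t^2))]
  rw [div_eq_mul_inv, ← mul_assoc]
  calc |t| * r * (Real.sqrt (1 + t^2))⁻¹ < Real.sqrt (1 + t^2) * r * (Real.sqrt (1 + t^2))⁻¹ := by
        apply mul_lt_mul_of_pos_right _ (by positivity)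
        exact mul_lt_mul_of_pos_right h2 hr
    _ = r := by field_simp

lemma u_contDiff {r : ℝ} {k : WithTop ℕ∞} :
    ContDiff ℝ k (fun t : ℝ => r / Real.sqrt (1 + t^2)) := by
  apply contDiff_const.div
  · exact (contDiff_const.add (contDiff_id.pow 2)).sqrt (fun t => by positivity)
  · intro t
    have : 0 < Real.sqrt (1 + t^2) := Real.sqrt_pos.mpr (by positivity)
    exact this.ne'

/-- If `f` is `C^n` near `0` and `f(t) = t^m g(t)` near `0` with `g` continuous, where
`m < n` is the order of flatness of `f` at `0` (i.e. no factorization `t^(m+1) · h(t)` with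
`h` continuous is possible), then `g` is `C^(n-m)` near `0` and `g 0 ≠ 0`. -/
theorem multiplicity_factor_regularity
    (n m : ℕ) (hmn : m < n) (f g : ℝ → ℝ) (ε : ℝ) (hε : 0 < ε)
    (hf : ContDiffOn ℝ n f (ball (0 : ℝ) ε))
    (hg : ContinuousOn g (ball (0 : ℝ) ε))
    (heq : ∀ t ∈ ball (0 : ℝ) ε, f t = t ^ m * g t)
    (hmax : ¬ ∃ (h : ℝ → ℝ) (δ : ℝ), 0 < δ ∧ ContinuousOn h (ball (0 : ℝ) δ) ∧
        ∀ t ∈ ball (0 : ℝ) δ, f t = t ^ (m + 1) * h t) :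
    ∃ δ > 0, ContDiffOn ℝ (n - m) g (ball (0 : ℝ) δ) ∧ g 0 ≠ 0 := by
  set r := ε / 2 with hrdef
  have hr : 0 < r := by positivity
  have hrε : r < ε := by rw [hrdef]; linarith
  set u : ℝ → ℝ := fun t => r / Real.sqrt (1 + t^2) with hudef
  set ψ : ℝ → ℝ := fun t => t * u t with hψdef
  have hupos : ∀ t, 0 < u t := fun t => by
    have : 0 < Real.sqrt (1 + t^2) := Real.sqrt_pos.mpr (by positivity)
    positivity
  have hψmem : ∀ t, ψ t ∈ ball (0 : ℝ) ε := by
    intro t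
    simp only [mem_ball, Real.dist_eq, sub_zero]
    exact lt_trans (psi_lt hr) hrε
  have hψsm : ∀ k : WithTop ℕ∞, ContDiff ℝ k ψ := fun k => contDiff_id.mul u_contDiff
  have hψ0 : ψ 0 = 0 := by simp [hψdef]
  -- the composed function and factor
  set G : ℝ → ℝ := fun t => u t ^ m * g (ψ t) with hGdef
  have hftilde : ContDiff ℝ n (f ∘ ψ) := hf.comp_contDiff (hψsm n) hψmem
  have hGcont : Continuous G :=
    (u_contDiff (k := 0).continuous.pow m).mul (hg.comp_continuous (hψsm 0).continuous hψmem)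
  have hGeq : ∀ t, (f ∘ ψ) t = t ^ m * G t := by
    intro t
    simp only [Function.comp_apply, hGdef]
    rw [heq (ψ t) (hψmem t), hψdef]
    ring_nf
  have hGsm : ContDiff ℝ ((n - m : ℕ)) G :=
    factor_global m n hmn.le (f ∘ ψ) G hftilde hGcont hGeq
  -- inverse map χ
  set χ : ℝ → ℝ := fun y => y / Real.sqrt (r^2 - y^2) with hχdef
  have hball : ∀ y ∈ ball (0:ℝ) r, |y| < r := by
    intro y hy; simpa [Real.dist_eq] using hy
  have hsqpos : ∀ y ∈ ball (0:ℝ) r, 0 < Real.sqrt (r^2 - y^2) := by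
    intro y hy
    have := hball y hy
    apply Real.sqrt_pos.mpr
    nlinarith [sq_abs y, abs_nonneg y]
  have hχsm : ∀ k : WithTop ℕ∞, ContDiffOn ℝ k χ (ball (0:ℝ) r) := by
    intro k
    apply ContDiffOn.div contDiffOn_id
    · intro y hy
      have hyr := hball y hy
      have hne : r^2 - y^2 ≠ 0 := by nlinarith [sq_abs y, abs_nonneg y]
      exact ((contDiffAt_sqrt hne).comp y
        ((contDiff_const.sub (contDiff_id.pow 2)).contDiffAt)).contDiffWithinAt
    · intro y hy
      exact (hsqpos y hy).ne'
  have hψχ : ∀ y ∈ ball (0:ℝ) r, ψ (χ y) = y := by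
    intro y hy
    have := psi_chi hr (hball y hy)
    simpa [hψdef, hudef, hχdef] using this
  -- g is C^(n-m) on ball 0 r
  have hgsm : ContDiffOn ℝ ((n - m : ℕ)) g (ball (0:ℝ) r) := by
    have hdiv : ContDiff ℝ ((n - m : ℕ)) (fun t => G t / u t ^ m) :=
      hGsm.div (u_contDiff.pow m) (fun t => pow_ne_zero m (hupos t).ne')
    have hcomp : ContDiffOn ℝ ((n - m : ℕ)) ((fun t => G t / u t ^ m) ∘ χ) (ball (0:ℝ) r) :=
      hdiv.comp_contDiffOn (hχsm _)
    apply hcomp.congr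
    intro y hy
    simp only [Function.comp_apply, hGdef]
    rw [hψχ y hy]
    field_simp
    rw [mul_div_assoc, div_self (pow_ne_zero m (hupos _).ne'), mul_one]
  refine ⟨r, hr, hgsm, ?_⟩
  -- g 0 ≠ 0
  intro h0
  apply hmax
  have hG0 : G 0 = 0 := by
    simp only [hGdef, hψ0, h0, mul_zero]
  have e : n - m = (n - m - 1) + 1 := by omega
  have hGsm' : ContDiff ℝ (((n - m - 1 : ℕ) : WithTop ℕ∞) + 1) G := by
    rw [e] at hGsm; exact_mod_cast hGsm
  set H : ℝ → ℝ := dslope G 0 with hHdef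
  have hH : ContDiff ℝ ((n - m - 1 : ℕ)) H := hadamard_dslope hGsm'
  have hGt : ∀ t, G t = t * H t := by
    intro t
    have := sub_smul_dslope G 0 t
    rw [sub_zero, smul_eq_mul, hG0, sub_zero] at this
    exact this.symm
  refine ⟨fun y => ((Real.sqrt (r^2 - y^2))⁻¹)^(m+1) * H (χ y), r, hr, ?_, ?_⟩
  · apply ContinuousOn.mul
    · apply ContinuousOn.pow
      apply ContinuousOn.inv₀
      · exact (Real.continuous_sqrt.comp (by fun_prop)).continuousOn
      · intro y hy; exact (hsqpos y hy).ne'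
    · exact hH.continuous.comp_continuousOn (hχsm 0).continuousOn
  · intro y hy
    have h1 : f (ψ (χ y)) = (χ y) ^ m * G (χ y) := hGeq (χ y)
    rw [hψχ y hy] at h1
    rw [h1, hGt (χ y), hχdef]
    simp only [div_eq_mul_inv]
    rw [mul_pow]
    ring
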